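/- Let δ ∈ (0,1) and ε ∈ (0,1) be constants, and for each n ≥ 2 let (K_n, λ) be a random simple temporal graph on n vertices. Let k_0(n) = 2 ln n / ln(1/δ) and set k_n = ⌊(1−ε)·k_0(n)⌋. Then E[X^{(k_n)}] → ∞ as n → ∞. -/

import Mathlib

open MeasureTheory ProbabilityTheory

/-- The edge set of the complete graph `K_n` on vertex set `Fin n`:
unordered pairs of distinct vertices. -/
def EdgeKn (n : ℕ) : Type := {e : Sym2 (Fin n) // ¬ e.IsDiag}

/-- `Q` is a `δ`-temporal clique for the labeling `lam` if any two edges with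
both endpoints in `Q` carry labels at most `δ` apart. -/
def IsTemporalClique {n : ℕ} (lam : EdgeKn n → ℝ) (δ : ℝ) (Q : Finset (Fin n)) : Prop :=
  ∀ e e' : EdgeKn n, (∀ v ∈ e.1, v ∈ Q) → (∀ v ∈ e'.1, v ∈ Q) →
    |lam e - lam e'| ≤ δ

open scoped Classical in
/-- The number of `k`-element vertex subsets of `Fin n` that are `δ`-temporal cliques. -/
noncomputable def cliqueCount {n : ℕ} (lam : EdgeKn n → ℝ) (δ : ℝ) (k : ℕ) : ℕ :=
  ((Finset.univ.powersetCard k).filter (fun Q => IsTemporalClique lam δ Q)).card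

instance (n : ℕ) : Fintype (EdgeKn n) :=
  inferInstanceAs (Fintype {e : Sym2 (Fin n) // ¬ e.IsDiag})

open scoped Classical in
lemma card_sym2_filter {n : ℕ} (Q : Finset (Fin n)) :
    (Q.sym2.filter fun e => ¬ e.IsDiag).card = Q.card.choose 2 := by
  have h1 : (Q.sym2.filter fun e => e.IsDiag) = Q.image Sym2.diag := by
    ext z
    induction z using Sym2.ind with
    | _ x y =>
      simp only [Finset.mem_filter, Finset.mk_mem_sym2_iff, Sym2.mk_isDiag_iff,
        Finset.mem_image]
      constructor
      · rintro ⟨⟨hx, hy⟩, rfl⟩; exact ⟨x, hx, rfl⟩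
      · rintro ⟨a, ha, h⟩
        rw [Sym2.diag, Sym2.eq_iff] at h
        rcases h with ⟨rfl, rfl⟩ | ⟨rfl, rfl⟩ <;> exact ⟨⟨ha, ha⟩, rfl⟩
  have h2 := Finset.card_filter_add_card_filter_not
    (s := Q.sym2) (p := fun e => e.IsDiag)
  rw [h1, Finset.card_image_of_injective _ Sym2.diag_injective, Finset.card_sym2] at h2
  have h3 : (Q.card + 1).choose 2 = Q.card.choose 1 + Q.card.choose 2 :=
    Nat.choose_succ_succ _ _
  rw [Nat.choose_one_right] at h3
  omega

open scoped Classical in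
lemma card_edges_le {n : ℕ} (Q : Finset (Fin n)) :
    (Finset.univ.filter (fun e : EdgeKn n => ∀ v ∈ e.1, v ∈ Q)).card ≤ Q.card.choose 2 := by
  rw [← card_sym2_filter Q]
  apply Finset.card_le_card_of_injOn (fun e => e.1)
  · intro e he
    simp only [Finset.mem_coe, Finset.mem_filter, Finset.mem_univ, true_and] at he ⊢
    exact ⟨Finset.mem_sym2_iff.2 he, e.2⟩
  · intro e _ e' _ h
    exact Subtype.ext h

open scoped Classical in
lemma measurableSet_clique {n : ℕ} {Ω : Type*} [MeasurableSpace Ω]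
    (lam : EdgeKn n → Ω → ℝ) (hmeas : ∀ e, Measurable (lam e)) (δ : ℝ) (Q : Finset (Fin n)) :
    MeasurableSet {ω | IsTemporalClique (fun e => lam e ω) δ Q} := by
  have : {ω | IsTemporalClique (fun e => lam e ω) δ Q}
      = ⋂ (e : EdgeKn n) (e' : EdgeKn n) (_ : ∀ v ∈ e.1, v ∈ Q) (_ : ∀ v ∈ e'.1, v ∈ Q),
        {ω | |lam e ω - lam e' ω| ≤ δ} := by
    ext ω
    simp only [Set.mem_setOf_eq, Set.mem_iInter, IsTemporalClique]
  rw [this]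
  exact MeasurableSet.iInter fun e => MeasurableSet.iInter fun e' =>
    MeasurableSet.iInter fun _ => MeasurableSet.iInter fun _ =>
      measurableSet_le ((hmeas e).sub (hmeas e')).abs measurable_const

open scoped Classical in
lemma expec_ge {n : ℕ} (δ : ℝ) (hδ0 : 0 < δ) (hδ1 : δ < 1) {Ω : Type*} [MeasurableSpace Ω]
    (P : Measure Ω) [IsProbabilityMeasure P] (k : ℕ) (lam : EdgeKn n → Ω → ℝ)
    (hmeas : ∀ e, Measurable (lam e))
    (hindep : iIndepFun lam P)
    (hunif : ∀ e, Measure.map (lam e) P = (volume : Measure ℝ).restrict (Set.Icc 0 1)) :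
    (n.choose k : ℝ) * δ ^ (k.choose 2) ≤ ∫ ω, (cliqueCount (fun e => lam e ω) δ k : ℝ) ∂P := by
  set A : Finset (Fin n) → Set Ω := fun Q => {ω | IsTemporalClique (fun e => lam e ω) δ Q}
    with hA_def
  have hA : ∀ Q, MeasurableSet (A Q) := fun Q => measurableSet_clique lam hmeas δ Q
  have key : ∀ ω, (cliqueCount (fun e => lam e ω) δ k : ℝ)
      = ∑ Q ∈ Finset.univ.powersetCard k, (A Q).indicator (fun _ => (1:ℝ)) ω := by
    intro ω
    rw [cliqueCount, Finset.card_filter]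
    push_cast
    refine Finset.sum_congr rfl fun Q _ => ?_
    by_cases h : IsTemporalClique (fun e => lam e ω) δ Q <;>
      simp [h, Set.indicator, hA_def]
  have step1 : ∫ ω, (cliqueCount (fun e => lam e ω) δ k : ℝ) ∂P
      = ∑ Q ∈ Finset.univ.powersetCard k, (P (A Q)).toReal := by
    simp_rw [key]
    rw [integral_finset_sum _ (fun Q _ => (integrable_const (1:ℝ)).indicator (hA Q))]
    refine Finset.sum_congr rfl fun Q _ => ?_
    rw [integral_indicator_const (1:ℝ) (hA Q), smul_eq_mul, mul_one]
    rfl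
  rw [step1]
  have hcard : (Finset.univ.powersetCard k : Finset (Finset (Fin n))).card = n.choose k := by
    rw [Finset.card_powersetCard, Finset.card_univ, Fintype.card_fin]
  have hbound : ∀ Q ∈ (Finset.univ.powersetCard k : Finset (Finset (Fin n))),
      δ ^ (k.choose 2) ≤ (P (A Q)).toReal := by
    intro Q hQ
    have hQcard : Q.card = k := (Finset.mem_powersetCard_univ.1 hQ)
    set S : Finset (EdgeKn n) := Finset.univ.filter (fun e : EdgeKn n => ∀ v ∈ e.1, v ∈ Q)
      with hS_def
    have hsub : (⋂ e ∈ S, lam e ⁻¹' Set.Icc 0 δ) ⊆ A Q := by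
      intro ω hω e e' he he'
      have h1 : lam e ω ∈ Set.Icc (0:ℝ) δ := by
        have := Set.mem_iInter₂.1 hω e (Finset.mem_filter.2 ⟨Finset.mem_univ e, he⟩)
        exact this
      have h2 : lam e' ω ∈ Set.Icc (0:ℝ) δ := by
        have := Set.mem_iInter₂.1 hω e' (Finset.mem_filter.2 ⟨Finset.mem_univ e', he'⟩)
        exact this
      rw [abs_sub_le_iff]
      constructor <;> linarith [h1.1, h1.2, h2.1, h2.2]
    have hPB : P (⋂ e ∈ S, lam e ⁻¹' Set.Icc 0 δ) = (ENNReal.ofReal δ) ^ S.card := by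
      rw [hindep.measure_inter_preimage_eq_mul S (fun i _ => measurableSet_Icc)]
      have : ∀ e ∈ S, P (lam e ⁻¹' Set.Icc 0 δ) = ENNReal.ofReal δ := by
        intro e _
        rw [← Measure.map_apply (hmeas e) measurableSet_Icc, hunif e,
          Measure.restrict_apply measurableSet_Icc,
          Set.inter_eq_left.2 (Set.Icc_subset_Icc le_rfl hδ1.le), Real.volume_Icc, sub_zero]
      rw [Finset.prod_congr rfl this, Finset.prod_const]
    have hcard_le : S.card ≤ k.choose 2 := by
      rw [← hQcard]; exact card_edges_le Q
    have h1 : δ ^ (k.choose 2) ≤ δ ^ S.card :=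
      pow_le_pow_of_le_one hδ0.le hδ1.le hcard_le
    have h2 : δ ^ S.card = (P (⋂ e ∈ S, lam e ⁻¹' Set.Icc 0 δ)).toReal := by
      rw [hPB, ENNReal.toReal_pow, ENNReal.toReal_ofReal hδ0.le]
    have h3 : (P (⋂ e ∈ S, lam e ⁻¹' Set.Icc 0 δ)).toReal ≤ (P (A Q)).toReal :=
      ENNReal.toReal_mono (measure_ne_top _ _) (measure_mono hsub)
    linarith
  calc (n.choose k : ℝ) * δ ^ (k.choose 2)
      = (Finset.univ.powersetCard k : Finset (Finset (Fin n))).card • (δ ^ (k.choose 2)) := by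
        rw [hcard, nsmul_eq_mul]
    _ ≤ ∑ Q ∈ Finset.univ.powersetCard k, (P (A Q)).toReal :=
        Finset.card_nsmul_le_sum _ _ _ hbound

set_option maxHeartbeats 1000000 in
open Filter in
lemma tendsto_lb (δ : ℝ) (hδ0 : 0 < δ) (hδ1 : δ < 1) (ε : ℝ) (hε0 : 0 < ε) (hε1 : ε < 1)
    (kseq : ℕ → ℕ)
    (hk : ∀ n, kseq n = ⌊(1 - ε) * (2 * Real.log n / Real.log (1/δ))⌋₊) :
    Tendsto (fun n : ℕ => (n.choose (kseq n) : ℝ) * δ ^ ((kseq n).choose 2)) atTop atTop := by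
  set L : ℝ := Real.log (1/δ) with hL_def
  have hL : 0 < L := Real.log_pos (one_lt_one_div hδ0 hδ1)
  have hlogδ : Real.log δ = -L := by
    rw [hL_def, one_div, Real.log_inv, neg_neg]
  set φ : ℕ → ℝ := fun n => (1 - ε) * (2 * Real.log n / L) with hφ_def
  have hlogn : Tendsto (fun n : ℕ => Real.log n) atTop atTop :=
    Real.tendsto_log_atTop.comp tendsto_natCast_atTop_atTop
  have hφ : Tendsto φ atTop atTop := by
    have : φ = fun n : ℕ => ((1 - ε) * 2 / L) * Real.log n := by
      funext n; rw [hφ_def]; ring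
    rw [this]
    have h1e : (0:ℝ) < 1 - ε := by linarith
    exact hlogn.const_mul_atTop (by positivity)
  have hkseq : Tendsto kseq atTop atTop := by
    have : kseq = fun n => ⌊φ n⌋₊ := funext fun n => hk n
    rw [this]
    exact tendsto_nat_floor_atTop.comp hφ
  -- eventual facts
  have Ev0 : ∀ᶠ n : ℕ in atTop, (2:ℝ) ≤ (n:ℝ) :=
    tendsto_natCast_atTop_atTop.eventually (eventually_ge_atTop 2)
  have Ev1 : ∀ᶠ n : ℕ in atTop, (1:ℝ) ≤ Real.log n :=
    hlogn.eventually (eventually_ge_atTop 1)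
  have Ev2 : ∀ᶠ n : ℕ in atTop, 1 ≤ kseq n := hkseq.eventually (eventually_ge_atTop 1)
  have Ev3' : ∀ᶠ n : ℕ in atTop, (8:ℝ) / L ≤ Real.sqrt n := by
    filter_upwards [tendsto_natCast_atTop_atTop.eventually
      (eventually_ge_atTop (((8:ℝ)/L)^2))] with n hn
    calc (8:ℝ)/L = Real.sqrt (((8:ℝ)/L)^2) := (Real.sqrt_sq (by positivity)).symm
      _ ≤ Real.sqrt n := Real.sqrt_le_sqrt hn
  have Ev3 : ∀ᶠ n : ℕ in atTop, 2 * Real.log n / L ≤ (n:ℝ) / 2 := by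
    filter_upwards [Ev0, Ev3'] with n h0 h3
    have hn1 : (1:ℝ) ≤ (n:ℝ) := by linarith
    have hsq : Real.sqrt n * Real.sqrt n = (n:ℝ) :=
      Real.mul_self_sqrt (by linarith)
    have hs1 : (1:ℝ) ≤ Real.sqrt n := by
      nlinarith [Real.sqrt_nonneg (n:ℝ)]
    have hlog_le : Real.log n ≤ 2 * Real.sqrt n := by
      have h1 : Real.log n = 2 * Real.log (Real.sqrt n) := by
        rw [Real.log_sqrt (by linarith)]; ring
      have h2 : Real.log (Real.sqrt n) ≤ Real.sqrt n - 1 :=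
        Real.log_le_sub_one_of_pos (by linarith)
      linarith
    rw [div_le_div_iff₀ hL (by norm_num)]
    have h8 : 8 ≤ L * Real.sqrt n := by
      rw [← div_le_iff₀' hL] at *
      linarith [h3]
    nlinarith [Real.sqrt_nonneg (n:ℝ)]
  have Ev4 : ∀ᶠ n : ℕ in atTop,
      Real.log 2 + Real.log (2 * Real.log n / L) ≤ (ε/2) * Real.log n := by
    have hC : Tendsto (fun n : ℕ => (ε/4) * Real.log n) atTop atTop :=
      hlogn.const_mul_atTop (by positivity)
    filter_upwards [Ev1,
      hC.eventually (eventually_ge_atTop (Real.log 2 + Real.log (8/(ε*L)) - 1))] with n h1 h2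
    have ht : (0:ℝ) < Real.log n := by linarith
    have hrw : 2 * Real.log n / L = (8/(ε*L)) * ((ε/4) * Real.log n) := by
      field_simp; ring
    rw [hrw, Real.log_mul (by positivity) (by positivity)]
    have h3 : Real.log ((ε/4) * Real.log n) ≤ (ε/4) * Real.log n - 1 :=
      Real.log_le_sub_one_of_pos (by positivity)
    linarith
  -- main eventual inequality
  have main : ∀ᶠ n : ℕ in atTop,
      Real.exp ((kseq n : ℝ) * ((ε/2) * Real.log n))
        ≤ (n.choose (kseq n) : ℝ) * δ ^ ((kseq n).choose 2) := by
    filter_upwards [Ev0, Ev1, Ev2, Ev3, Ev4] with n h0 h1 h2 h3 h4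
    set k : ℕ := kseq n with hk_def
    set K : ℝ := (k : ℝ) with hK_def
    set t : ℝ := Real.log n with ht_def
    have hK1 : (1:ℝ) ≤ K := by rw [hK_def]; exact_mod_cast h2
    have hkpos : (0:ℝ) < (k:ℝ) := by
      have : (1:ℝ) ≤ (k:ℝ) := by exact_mod_cast h2
      linarith
    have ht0 : (0:ℝ) < t := by linarith
    have hφpos : 0 ≤ φ n := by
      rw [hφ_def]
      exact mul_nonneg (by linarith) (by positivity)
    have hkφ : K ≤ φ n := by
      rw [hK_def, hk_def, hk n]; exact Nat.floor_le hφpos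
    have hφ2 : φ n ≤ 2 * t / L := by
      rw [hφ_def]
      nlinarith [div_nonneg (by linarith : (0:ℝ) ≤ 2 * t) hL.le]
    have hKn2 : K ≤ (n:ℝ)/2 := le_trans (hkφ.trans hφ2) h3
    have hkn : k ≤ n + 1 := by
      have hh : (k:ℝ) ≤ (n:ℝ) + 1 := by rw [← hK_def]; linarith
      exact_mod_cast hh
    -- log k bound
    have hlogk : Real.log K ≤ Real.log (2 * t / L) :=
      Real.log_le_log (by linarith) (hkφ.trans hφ2)
    have hlogK_bd : Real.log 2 + Real.log K ≤ (ε/2) * t := by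
      have := h4; linarith
    -- m L bound
    set m : ℕ := k.choose 2 with hm_def
    have hmcast : (m : ℝ) = K * (K - 1) / 2 := by
      rw [hm_def, Nat.cast_choose_two]
    have hKL : K * L ≤ (1 - ε) * (2 * t) := by
      have := hkφ
      rw [hφ_def] at this
      calc K * L ≤ ((1-ε) * (2 * t / L)) * L := by
            exact mul_le_mul_of_nonneg_right this hL.le
        _ = (1 - ε) * (2 * t) := by field_simp
    have hmL : (m:ℝ) * L ≤ (1 - ε) * K * t := by
      have h5 : (m:ℝ) * L = (K - 1)/2 * (K * L) := by rw [hmcast]; ring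
      have h6 : (K - 1)/2 * (K * L) ≤ (K - 1)/2 * ((1-ε) * (2*t)) :=
        mul_le_mul_of_nonneg_left hKL (by linarith)
      have h7 : (K - 1)/2 * ((1-ε) * (2*t)) = (1-ε) * (K-1) * t := by ring
      nlinarith [mul_nonneg (mul_nonneg (by linarith : (0:ℝ) ≤ 1-ε) (by norm_num : (0:ℝ) ≤ 1)) ht0.le]
    -- choose lower bound
    have hchoose : (((n + 1 - k : ℕ)) ^ k : ℝ) / (k.factorial : ℝ) ≤ n.choose k :=
      Nat.pow_le_choose k n
    have hcast : ((n + 1 - k : ℕ) : ℝ) = (n:ℝ) + 1 - K := by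
      rw [Nat.cast_sub hkn]; push_cast; ring
    have hbase : (n:ℝ)/2 ≤ ((n + 1 - k : ℕ) : ℝ) := by
      rw [hcast]; linarith
    have hfact : (k.factorial : ℝ) ≤ K ^ k := by
      rw [hK_def]; exact_mod_cast Nat.factorial_le_pow k
    have hpow : ((n:ℝ)/2) ^ k ≤ (((n + 1 - k : ℕ)) ^ k : ℝ) := by
      push_cast
      exact pow_le_pow_left₀ (by linarith) hbase k
    have hKpow_pos : (0:ℝ) < K ^ k := by positivity
    have hfact_pos : (0:ℝ) < (k.factorial : ℝ) := by exact_mod_cast k.factorial_pos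
    have hchoose2 : ((n:ℝ)/2) ^ k / K ^ k ≤ (n.choose k : ℝ) :=
      le_trans (div_le_div₀ (by positivity) hpow hfact_pos hfact) hchoose
    -- exponential forms
    have hn2pos : (0:ℝ) < (n:ℝ)/2 := by linarith
    have hexp1 : ((n:ℝ)/2) ^ k = Real.exp (K * Real.log ((n:ℝ)/2)) := by
      rw [hK_def, Real.exp_nat_mul, Real.exp_log hn2pos]
    have hexp2 : K ^ k = Real.exp (K * Real.log K) := by
      rw [hK_def, Real.exp_nat_mul, Real.exp_log hkpos]
    have hexp3 : δ ^ m = Real.exp ((m:ℝ) * Real.log δ) := by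
      rw [Real.exp_nat_mul, Real.exp_log hδ0]
    have hglb : Real.exp (K * Real.log ((n:ℝ)/2) - K * Real.log K + (m:ℝ) * Real.log δ)
        ≤ (n.choose k : ℝ) * δ ^ m := by
      rw [Real.exp_add, Real.exp_sub, ← hexp1, ← hexp2, ← hexp3]
      exact mul_le_mul_of_nonneg_right hchoose2 (by positivity)
    refine le_trans ?_ hglb
    apply Real.exp_le_exp.2
    have hlogdiv : Real.log ((n:ℝ)/2) = t - Real.log 2 := by
      rw [Real.log_div (by linarith) (by norm_num)]
    rw [hlogdiv, hlogδ]
    -- goal: K * ((ε/2)*t) ≤ K*(t - log 2) - K*log K - m*L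
    have hfin : K * ((ε/2) * t) ≤ K * (t - Real.log 2) - K * Real.log K - (m:ℝ) * L := by
      have h8 : K * (Real.log 2 + Real.log K) ≤ K * ((ε/2) * t) :=
        mul_le_mul_of_nonneg_left hlogK_bd (by linarith)
      nlinarith [hmL, h8]
    linarith
  -- conclude
  have hexp_tendsto : Tendsto (fun n : ℕ => Real.exp ((kseq n : ℝ) * ((ε/2) * Real.log n)))
      atTop atTop := by
    apply Real.tendsto_exp_atTop.comp
    exact (tendsto_natCast_atTop_atTop.comp hkseq).atTop_mul_atTop₀
      (hlogn.const_mul_atTop (by positivity))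
  exact tendsto_atTop_mono' atTop main hexp_tendsto

open Filter in
/-- For constants `δ ∈ (0,1)` and `ε ∈ (0,1)`, with `k₀(n) = 2 ln n / ln(1/δ)`
and `k_n = ⌊(1-ε) k₀(n)⌋`, the expected number of `δ`-temporal cliques of size `k_n`
in the random simple temporal graph `(K_n, λ)` tends to `∞` as `n → ∞`. -/
theorem stmt9
    (δ : ℝ) (hδ0 : 0 < δ) (hδ1 : δ < 1) (ε : ℝ) (hε0 : 0 < ε) (hε1 : ε < 1)
    {Ω : ℕ → Type*} [∀ n, MeasurableSpace (Ω n)]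
    (P : ∀ n, Measure (Ω n)) (hP : ∀ n, IsProbabilityMeasure (P n))
    (lam : ∀ n, EdgeKn n → Ω n → ℝ) (hmeas : ∀ n e, Measurable (lam n e))
    (hindep : ∀ n, iIndepFun (lam n) (P n))
    (hunif : ∀ n e, Measure.map (lam n e) (P n) = (volume : Measure ℝ).restrict (Set.Icc 0 1))
    (kseq : ℕ → ℕ)
    (hk : ∀ n, kseq n = ⌊(1 - ε) * (2 * Real.log n / Real.log (1/δ))⌋₊) :
    Tendsto (fun n => ∫ ω, (cliqueCount (fun e => lam n e ω) δ (kseq n) : ℝ) ∂(P n))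
      atTop atTop := by
  have key : ∀ n, ((n.choose (kseq n) : ℝ) * δ ^ ((kseq n).choose 2))
      ≤ ∫ ω, (cliqueCount (fun e => lam n e ω) δ (kseq n) : ℝ) ∂(P n) := fun n =>
    haveI := hP n
    expec_ge δ hδ0 hδ1 (P n) (kseq n) (lam n) (hmeas n) (hindep n) (hunif n)
  exact tendsto_atTop_mono key (tendsto_lb δ hδ0 hδ1 ε hε0 hε1 kseq hk)
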